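/- Let n and k be positive integers with k ≤ n/2. In any n-vertex graph with maximum degree at most n/k, a uniformly random k-element subset of the vertices contains an independent set of size at least k/4 with probability at least 1 − e^{−k/8}. -/

import Mathlib

open Finset

lemma descFactorial_mul_pow_le {a b : ℕ} (hab : a ≤ b) (r : ℕ) :
    a.descFactorial r * b ^ r ≤ b.descFactorial r * a ^ r := by
  induction r with
  | zero => simp
  | succ r ih =>
    rw [Nat.descFactorial_succ, Nat.descFactorial_succ, pow_succ, pow_succ]
    have key : (a - r) * b ≤ (b - r) * a := by
      rcases le_total a r with h | h
      · simp [Nat.sub_eq_zero_of_le h]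
      · calc (a - r) * b = a * b - r * b := by rw [Nat.sub_mul]
          _ ≤ a * b - r * a := Nat.sub_le_sub_left (Nat.mul_le_mul_left r hab) _
          _ = (b - r) * a := by rw [Nat.sub_mul, Nat.mul_comm a b]
    calc (a - r) * a.descFactorial r * (b ^ r * b)
        = ((a - r) * b) * (a.descFactorial r * b ^ r) := by ring
      _ ≤ ((b - r) * a) * (b.descFactorial r * a ^ r) := Nat.mul_le_mul key ih
      _ = (b - r) * b.descFactorial r * (a ^ r * a) := by ring

lemma choose_mul_pow_le {a b : ℕ} (hab : a ≤ b) (r : ℕ) :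
    a.choose r * b ^ r ≤ b.choose r * a ^ r := by
  have h := descFactorial_mul_pow_le hab r
  rw [Nat.descFactorial_eq_factorial_mul_choose, Nat.descFactorial_eq_factorial_mul_choose] at h
  have h' : r.factorial * (a.choose r * b ^ r) ≤ r.factorial * (b.choose r * a ^ r) := by
    calc r.factorial * (a.choose r * b ^ r) = r.factorial * a.choose r * b ^ r := by ring
      _ ≤ r.factorial * b.choose r * a ^ r := h
      _ = r.factorial * (b.choose r * a ^ r) := by ring
  exact Nat.le_of_mul_le_mul_left h' (Nat.factorial_pos r)

lemma choose_le_two_pow' (k j : ℕ) (h : j ≤ k) : k.choose j ≤ 2 ^ k := by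
  calc k.choose j ≤ ∑ m ∈ Finset.range (k + 1), k.choose m :=
        Finset.single_le_sum (fun i _ => Nat.zero_le _) (Finset.mem_range.mpr (by omega))
    _ = 2 ^ k := Nat.sum_range_choose k

lemma nat_key (k r : ℕ) (hk : 1 ≤ k) (hr : 3 * k + 1 ≤ 4 * r) :
    7 * 2 ^ k * 2 ^ r * 8 ^ k ≤ 5 * 7 ^ r * 7 ^ k := by
  rw [← Nat.pow_le_pow_iff_left (n := 4) (by norm_num)]
  obtain ⟨t, ht⟩ : ∃ t, 4 * r = 3 * k + 1 + t := ⟨4 * r - (3 * k + 1), by omega⟩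
  have lhs_eq : (7 * 2 ^ k * 2 ^ r * 8 ^ k) ^ 4 = 4802 * 2 ^ (19 * k) * 2 ^ t := by
    have h8 : (8 : ℕ) = 2 ^ 3 := by norm_num
    rw [h8]
    rw [mul_pow, mul_pow, mul_pow, ← pow_mul, ← pow_mul, ← pow_mul, ← pow_mul]
    rw [show (2:ℕ) ^ (r * 4) = 2 ^ (4 * r) by ring_nf, ht]
    ring
  have rhs_eq : (5 * 7 ^ r * 7 ^ k) ^ 4 = 4375 * 7 ^ (7 * k) * 7 ^ t := by
    rw [mul_pow, mul_pow, ← pow_mul, ← pow_mul]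
    rw [show (7:ℕ) ^ (r * 4) = 7 ^ (4 * r) by ring_nf, ht]
    ring
  rw [lhs_eq, rhs_eq]
  have step : 4802 * 2 ^ (19 * k) ≤ 4375 * 7 ^ (7 * k) := by
    obtain ⟨s, rfl⟩ : ∃ s, k = s + 1 := ⟨k - 1, by omega⟩
    have e2 : (2:ℕ) ^ (19 * (s + 1)) = 2 ^ 19 * (2 ^ 19) ^ s := by
      rw [← pow_mul, ← pow_add]; ring_nf
    have e7 : (7:ℕ) ^ (7 * (s + 1)) = 7 ^ 7 * (7 ^ 7) ^ s := by
      rw [← pow_mul, ← pow_add]; ring_nf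
    rw [e2, e7, ← mul_assoc, ← mul_assoc]
    exact Nat.mul_le_mul (by norm_num) (Nat.pow_le_pow_left (by norm_num) s)
  exact Nat.mul_le_mul step (Nat.pow_le_pow_left (by norm_num) t)

lemma exists_maxIndep {V : Type*} [DecidableEq V] (G : SimpleGraph V)
    [DecidableRel G.Adj] (s : Finset V) :
    ∃ I, I ⊆ s ∧ (∀ a ∈ I, ∀ b ∈ I, ¬ G.Adj a b) ∧
      (∀ v ∈ s, v ∉ I → ∃ w ∈ I, G.Adj v w) ∧ (s.Nonempty → I.Nonempty) := by
  obtain ⟨I, hImem, hImax⟩ := Finset.exists_max_image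
    (s.powerset.filter fun t => ∀ a ∈ t, ∀ b ∈ t, ¬ G.Adj a b) Finset.card
    ⟨∅, by simp⟩
  rw [mem_filter, mem_powerset] at hImem
  obtain ⟨hIs, hind⟩ := hImem
  refine ⟨I, hIs, hind, ?_, ?_⟩
  · intro v hv hvI
    by_contra hno
    push_neg at hno
    have hins : insert v I ∈
        (s.powerset.filter fun t => ∀ a ∈ t, ∀ b ∈ t, ¬ G.Adj a b) := by
      rw [mem_filter, mem_powerset]
      refine ⟨insert_subset hv hIs, ?_⟩
      intro a ha b hb h
      rcases mem_insert.mp ha with h1 | h1 <;> rcases mem_insert.mp hb with h2 | h2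
      · rw [h1, h2] at h; exact G.irrefl h
      · rw [h1] at h; exact hno b h2 h
      · rw [h2] at h; exact hno a h1 h.symm
      · exact hind a h1 b h2 h
    have hle := hImax _ hins
    rw [card_insert_of_notMem hvI] at hle
    omega
  · rintro ⟨v, hv⟩
    have h1 : ({v} : Finset V) ∈
        (s.powerset.filter fun t => ∀ a ∈ t, ∀ b ∈ t, ¬ G.Adj a b) := by
      rw [mem_filter, mem_powerset]
      refine ⟨singleton_subset_iff.mpr hv, ?_⟩
      intro a ha b hb
      rw [mem_singleton] at ha hb
      rw [ha, hb]
      exact G.irrefl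
    have := hImax _ h1
    rw [card_singleton] at this
    exact card_pos.mp (by omega)

open scoped Classical in
theorem stmt_9 {V : Type*} [Fintype V] (G : SimpleGraph V)
    (n k : ℕ) (hn : n = Fintype.card V) (hk : 1 ≤ k) (hkn : 2 * k ≤ n)
    (hdeg : ∀ v : V, (G.degree v : ℝ) ≤ (n : ℝ) / k) :
    (1 - Real.exp (-(k : ℝ) / 8)) * (n.choose k) ≤
      (((univ : Finset V).powersetCard k).filter fun s =>
        ∃ I ⊆ s, (k : ℝ) / 4 ≤ I.card ∧ ∀ a ∈ I, ∀ b ∈ I, ¬ G.Adj a b).card := by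
  classical
  have hcard_univ : (univ : Finset V).card = n := by rw [card_univ, hn]
  have htot : ((univ : Finset V).powersetCard k).card = n.choose k := by
    rw [card_powersetCard, hcard_univ]
  set P : Finset V → Prop := fun s =>
    ∃ I ⊆ s, (k : ℝ) / 4 ≤ I.card ∧ ∀ a ∈ I, ∀ b ∈ I, ¬ G.Adj a b with hPdef
  have key : ((((univ : Finset V).powersetCard k).filter fun s => ¬ P s).card : ℝ)
      ≤ Real.exp (-(k : ℝ) / 8) * n.choose k := by
    by_cases hk4 : k ≤ 4
    · have hbad : (((univ : Finset V).powersetCard k).filter fun s => ¬ P s) = ∅ := by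
        rw [filter_eq_empty_iff]
        intro s hs
        rw [mem_powersetCard_univ] at hs
        rw [not_not, hPdef]
        obtain ⟨v, hv⟩ : s.Nonempty := card_pos.mp (by omega)
        refine ⟨{v}, singleton_subset_iff.mpr hv, ?_, ?_⟩
        · rw [card_singleton]
          have : (k : ℝ) ≤ 4 := by exact_mod_cast hk4
          push_cast
          linarith
        · intro a ha b hb
          rw [mem_singleton] at ha hb
          rw [ha, hb]
          exact G.irrefl
      rw [hbad]
      simp only [card_empty, Nat.cast_zero]
      positivity
    · push_neg at hk4
      set d := n / k with hd
      set m := (k - 1) / 4 with hm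
      have hm4 : 4 * m ≤ k - 1 := by omega
      have hmk : m < k := by omega
      have hm1 : 1 ≤ m := by omega
      have hdeg' : ∀ v : V, G.degree v ≤ d := by
        intro v
        have h1 := hdeg v
        have hk0 : (0:ℝ) < (k:ℝ) := by positivity
        rw [le_div_iff₀ hk0] at h1
        have h2 : (G.degree v) * k ≤ n := by exact_mod_cast h1
        rw [hd, Nat.le_div_iff_mul_le (by omega : 0 < k)]
        exact h2
      have hkd : k * d ≤ n := by
        rw [hd, Nat.mul_comm]
        exact Nat.div_mul_le_self n k
      set maxI : Finset V → Finset V := fun s => (exists_maxIndep G s).choose with hmaxI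
      have hspec : ∀ s : Finset V, (maxI s) ⊆ s ∧ (∀ a ∈ maxI s, ∀ b ∈ maxI s, ¬ G.Adj a b) ∧
          (∀ v ∈ s, v ∉ maxI s → ∃ w ∈ maxI s, G.Adj v w) ∧ (s.Nonempty → (maxI s).Nonempty) :=
        fun s => (exists_maxIndep G s).choose_spec
      set NI : Finset V → Finset V := fun I => I.biUnion (fun v => G.neighborFinset v) with hNI
      set T := (Finset.Icc 1 m).sigma (fun j => ((univ : Finset V).powersetCard j).sigma
        (fun I => (NI I).powersetCard (k - j))) with hT
      have hinj : (((univ : Finset V).powersetCard k).filter fun s => ¬ P s).card ≤ T.card := by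
        apply Finset.card_le_card_of_injOn
          (fun s => (⟨(maxI s).card, ⟨maxI s, s \ maxI s⟩⟩ : (_ : ℕ) × (_ : Finset V) × Finset V))
        · intro s hs
          rw [Finset.mem_coe, mem_filter, mem_powersetCard_univ] at hs
          obtain ⟨hsk, hbad⟩ := hs
          obtain ⟨hsub, hind, hdom, hne⟩ := hspec s
          have hIne : (maxI s).Nonempty := hne (card_pos.mp (by omega))
          have h4 : 4 * (maxI s).card < k := by
            by_contra hcon
            push_neg at hcon
            apply hbad
            rw [hPdef]
            refine ⟨maxI s, hsub, ?_, hind⟩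
            rw [div_le_iff₀ (by norm_num : (0:ℝ) < 4)]
            have : (k : ℝ) ≤ 4 * ((maxI s).card : ℝ) := by exact_mod_cast hcon
            linarith
          rw [Finset.mem_coe, hT, Finset.mem_sigma]
          dsimp only
          constructor
          · rw [Finset.mem_Icc]
            exact ⟨card_pos.mpr hIne, by omega⟩
          · rw [Finset.mem_sigma]
            constructor
            · rw [mem_powersetCard_univ]
            · rw [mem_powersetCard]
              constructor
              · intro v hv
                rw [mem_sdiff] at hv
                obtain ⟨w, hw, hadj⟩ := hdom v hv.1 hv.2
                rw [hNI, mem_biUnion]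
                exact ⟨w, hw, (SimpleGraph.mem_neighborFinset _ _ _).mpr hadj.symm⟩
              · rw [card_sdiff_of_subset hsub, hsk]
        · intro s hs t ht heq
          obtain ⟨hsub, _, _, _⟩ := hspec s
          obtain ⟨htsub, _, _, _⟩ := hspec t
          simp only [Sigma.mk.inj_iff] at heq
          obtain ⟨h1, h2⟩ := heq
          obtain ⟨h3, h4⟩ := Sigma.mk.inj_iff.mp (eq_of_heq h2)
          have h5 := eq_of_heq h4
          calc s = maxI s ∪ (s \ maxI s) := (union_sdiff_of_subset hsub).symm
            _ = maxI t ∪ (t \ maxI t) := by rw [h5, h3]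
            _ = t := union_sdiff_of_subset htsub
      have hTcard : T.card ≤ ∑ j ∈ Finset.Icc 1 m, n.choose j * ((j * d).choose (k - j)) := by
        rw [hT, Finset.card_sigma]
        apply Finset.sum_le_sum
        intro j hj
        rw [Finset.card_sigma]
        calc ∑ I ∈ (univ : Finset V).powersetCard j, ((NI I).powersetCard (k - j)).card
            ≤ ∑ _I ∈ (univ : Finset V).powersetCard j, (j * d).choose (k - j) := by
              apply Finset.sum_le_sum
              intro I hI
              rw [card_powersetCard]
              apply Nat.choose_le_choose
              rw [mem_powersetCard_univ] at hI
              calc (NI I).card ≤ ∑ v ∈ I, (G.neighborFinset v).card := by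
                    rw [hNI]; exact card_biUnion_le
                _ ≤ ∑ _v ∈ I, d := Finset.sum_le_sum fun v _ => hdeg' v
                _ = I.card * d := by rw [Finset.sum_const, smul_eq_mul]
                _ = j * d := by rw [hI]
          _ = n.choose j * ((j * d).choose (k - j)) := by
              rw [Finset.sum_const, card_powersetCard, hcard_univ, smul_eq_mul]
      have hterm : ∀ j ∈ Finset.Icc 1 m, ((n.choose j * ((j * d).choose (k - j)) : ℕ) : ℝ)
          ≤ (n.choose k : ℝ) * 2 ^ k * ((2:ℝ)/7) ^ (k - j) := by
        intro j hj
        rw [Finset.mem_Icc] at hj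
        obtain ⟨hj1, hjm⟩ := hj
        have h4j : 4 * j ≤ k - 1 := by omega
        have h4a : 4 * (j * d) ≤ n := by
          calc 4 * (j * d) = (4 * j) * d := by ring
            _ ≤ k * d := Nat.mul_le_mul_right d (by omega)
            _ ≤ n := hkd
        have h8j : 8 * j ≤ n := by omega
        have hab : j * d ≤ n - j := by omega
        have h7a : 7 * (j * d) ≤ 2 * (n - j) := by omega
        have hjk : j ≤ k := by omega
        have hkn' : k ≤ n := by omega
        have hbpos : 0 < n - j := by omega
        have hchoose := choose_mul_pow_le hab (k - j)
        have hb' : (0:ℝ) < ((n - j : ℕ) : ℝ) := by exact_mod_cast hbpos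
        have hratio : ((j * d : ℕ) : ℝ) / ((n - j : ℕ) : ℝ) ≤ 2 / 7 := by
          rw [div_le_div_iff₀ hb' (by norm_num)]
          have h7a' : (j * d) * 7 ≤ 2 * (n - j) := by omega
          exact_mod_cast h7a'
        have hstep2 : (((j * d).choose (k - j) : ℕ) : ℝ)
            ≤ ((n - j).choose (k - j) : ℝ) * ((2:ℝ)/7) ^ (k - j) := by
          have hbpow : (0:ℝ) < ((n - j : ℕ) : ℝ) ^ (k - j) := by positivity
          have h1 : (((j * d).choose (k - j) : ℕ) : ℝ) * ((n - j : ℕ) : ℝ) ^ (k - j)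
              ≤ ((n - j).choose (k - j) : ℝ) * ((j * d : ℕ) : ℝ) ^ (k - j) := by
            exact_mod_cast hchoose
          calc (((j * d).choose (k - j) : ℕ) : ℝ)
              = (((j * d).choose (k - j) : ℕ) : ℝ) * ((n - j : ℕ) : ℝ) ^ (k - j)
                / ((n - j : ℕ) : ℝ) ^ (k - j) := by field_simp
            _ ≤ ((n - j).choose (k - j) : ℝ) * ((j * d : ℕ) : ℝ) ^ (k - j)
                / ((n - j : ℕ) : ℝ) ^ (k - j) := by
                gcongr
            _ = ((n - j).choose (k - j) : ℝ) * (((j * d : ℕ) : ℝ) / ((n - j : ℕ) : ℝ)) ^ (k - j) := by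
                rw [div_pow, mul_div_assoc]
            _ ≤ ((n - j).choose (k - j) : ℝ) * ((2:ℝ)/7) ^ (k - j) := by
                apply mul_le_mul_of_nonneg_left _ (by positivity)
                exact pow_le_pow_left₀ (by positivity) hratio _
        have hid : n.choose j * (n - j).choose (k - j) = n.choose k * k.choose j :=
          (Nat.choose_mul hjk).symm
        have h2k : (k.choose j : ℝ) ≤ 2 ^ k := by exact_mod_cast choose_le_two_pow' k j hjk
        calc ((n.choose j * ((j * d).choose (k - j)) : ℕ) : ℝ)
            = (n.choose j : ℝ) * (((j * d).choose (k - j) : ℕ) : ℝ) := by push_cast; ring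
          _ ≤ (n.choose j : ℝ) * (((n - j).choose (k - j) : ℝ) * ((2:ℝ)/7) ^ (k - j)) := by
              apply mul_le_mul_of_nonneg_left hstep2 (by positivity)
          _ = ((n.choose j * (n - j).choose (k - j) : ℕ) : ℝ) * ((2:ℝ)/7) ^ (k - j) := by
              push_cast; ring
          _ = ((n.choose k * k.choose j : ℕ) : ℝ) * ((2:ℝ)/7) ^ (k - j) := by rw [hid]
          _ ≤ (n.choose k : ℝ) * 2 ^ k * ((2:ℝ)/7) ^ (k - j) := by
              apply mul_le_mul_of_nonneg_right _ (by positivity)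
              push_cast
              apply mul_le_mul_of_nonneg_left h2k (by positivity)
      have hsum : ∑ j ∈ Finset.Icc 1 m, ((2:ℝ)/7) ^ (k - j) ≤ (7/5) * ((2:ℝ)/7) ^ (k - m) := by
        have hsplit2 : ∀ j ∈ Finset.Icc 1 m,
            ((2:ℝ)/7) ^ (k - j) = ((2:ℝ)/7) ^ (k - m) * ((2:ℝ)/7) ^ (m - j) := by
          intro j hj
          rw [Finset.mem_Icc] at hj
          rw [← pow_add]
          congr 1
          omega
        rw [Finset.sum_congr rfl hsplit2, ← Finset.mul_sum, mul_comm ((7:ℝ)/5) _]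
        apply mul_le_mul_of_nonneg_left _ (by positivity)
        have hre : ∑ j ∈ Finset.Icc 1 m, ((2:ℝ)/7) ^ (m - j)
            = ∑ i ∈ Finset.range m, ((2:ℝ)/7) ^ i := by
          apply Finset.sum_nbij' (fun j => m - j) (fun i => m - i)
          · intro a ha; rw [Finset.mem_Icc] at ha; rw [Finset.mem_range]; omega
          · intro a ha; rw [Finset.mem_range] at ha; rw [Finset.mem_Icc]; omega
          · intro a ha; rw [Finset.mem_Icc] at ha; omega
          · intro a ha; rw [Finset.mem_range] at ha; omega
          · intro a _; rfl
        rw [hre, geom_sum_eq (by norm_num : ((2:ℝ)/7) ≠ 1) m,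
          div_le_iff_of_neg (by norm_num : ((2:ℝ)/7 - 1) < 0)]
        have : (0:ℝ) ≤ ((2:ℝ)/7) ^ m := by positivity
        nlinarith
      have hfinal : ((7:ℝ)/5) * 2 ^ k * ((2:ℝ)/7) ^ (k - m) ≤ Real.exp (-(k:ℝ)/8) := by
        have h1 : (7:ℝ)/8 ≤ Real.exp (-(1:ℝ)/8) := by
          have := Real.add_one_le_exp (-(1:ℝ)/8)
          linarith
        have h78 : ((7:ℝ)/8) ^ k ≤ Real.exp (-(k:ℝ)/8) := by
          calc ((7:ℝ)/8) ^ k ≤ (Real.exp (-(1:ℝ)/8)) ^ k := by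
                apply pow_le_pow_left₀ (by norm_num) h1
            _ = Real.exp (-(k:ℝ)/8) := by
                rw [← Real.exp_nat_mul]
                congr 1
                ring
        refine le_trans ?_ h78
        have hr4 : 3 * k + 1 ≤ 4 * (k - m) := by omega
        have hnat := nat_key k (k - m) hk hr4
        have hre2 : ((7:ℝ) * 2 ^ k * 2 ^ (k - m) * 8 ^ k) ≤ 5 * 7 ^ (k - m) * 7 ^ k := by
          exact_mod_cast hnat
        have e1 : ((7:ℝ)/5) * 2 ^ k * ((2:ℝ)/7) ^ (k - m)
            = (7 * 2 ^ k * 2 ^ (k - m)) / (5 * 7 ^ (k - m)) := by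
          rw [div_pow]
          ring
        have e2 : ((7:ℝ)/8) ^ k = 7 ^ k / 8 ^ k := div_pow _ _ _
        rw [e1, e2, div_le_div_iff₀ (by positivity) (by positivity)]
        calc (7:ℝ) * 2 ^ k * 2 ^ (k - m) * 8 ^ k ≤ 5 * 7 ^ (k - m) * 7 ^ k := hre2
          _ = 7 ^ k * (5 * 7 ^ (k - m)) := by ring
      calc ((((univ : Finset V).powersetCard k).filter fun s => ¬ P s).card : ℝ)
          ≤ (T.card : ℝ) := by exact_mod_cast hinj
        _ ≤ ((∑ j ∈ Finset.Icc 1 m, n.choose j * ((j * d).choose (k - j)) : ℕ) : ℝ) := by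
            exact_mod_cast hTcard
        _ = ∑ j ∈ Finset.Icc 1 m, ((n.choose j * ((j * d).choose (k - j)) : ℕ) : ℝ) := by
            push_cast
            rfl
        _ ≤ ∑ j ∈ Finset.Icc 1 m, (n.choose k : ℝ) * 2 ^ k * ((2:ℝ)/7) ^ (k - j) :=
            Finset.sum_le_sum hterm
        _ = (n.choose k : ℝ) * 2 ^ k * ∑ j ∈ Finset.Icc 1 m, ((2:ℝ)/7) ^ (k - j) := by
            rw [← Finset.mul_sum]
        _ ≤ (n.choose k : ℝ) * 2 ^ k * ((7/5) * ((2:ℝ)/7) ^ (k - m)) := by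
            apply mul_le_mul_of_nonneg_left hsum (by positivity)
        _ = (n.choose k : ℝ) * (((7:ℝ)/5) * 2 ^ k * ((2:ℝ)/7) ^ (k - m)) := by ring
        _ ≤ (n.choose k : ℝ) * Real.exp (-(k:ℝ)/8) := by
            apply mul_le_mul_of_nonneg_left hfinal (by positivity)
        _ = Real.exp (-(k:ℝ)/8) * n.choose k := by ring

  have hsplit := Finset.card_filter_add_card_filter_not
    (s := (univ : Finset V).powersetCard k) (p := P)
  rw [htot] at hsplit
  have hgood : ((((univ : Finset V).powersetCard k).filter P).card : ℝ)
      = (n.choose k : ℝ) - ((((univ : Finset V).powersetCard k).filter fun s => ¬ P s).card : ℝ) := by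
    have h2 : ((((univ : Finset V).powersetCard k).filter P).card : ℝ)
        + ((((univ : Finset V).powersetCard k).filter fun s => ¬ P s).card : ℝ)
        = (n.choose k : ℝ) := by exact_mod_cast congrArg (Nat.cast (R := ℝ)) hsplit
    linarith
  rw [hgood]
  linarith [key]
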